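/- Let R > 0, let A be a nonzero purely imaginary quaternion, and let B ∈ ℍ with ‖B‖ = 1. Then the Korányi gauge of the point P = (−A⁻¹(1 − exp(RA))B, −(2/‖A‖³)(‖A‖R − sin(‖A‖R))A) equals ‖P‖_K = (4(1 − cos(‖A‖R))² + 4(‖A‖R − sin(‖A‖R))²)^{1/4} / ‖A‖. -/

import Mathlib

open Quaternion

/-- The Korányi gauge on the quaternionic Heisenberg group `ℍ × Im ℍ`:
`‖(q, t)‖_K = (‖q‖⁴ + ‖t‖²)^{1/4}`. -/
noncomputable def kGauge (P : ℍ[ℝ] × ℍ[ℝ]) : ℝ :=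
  (‖P.1‖ ^ 4 + ‖P.2‖ ^ 2) ^ ((1 : ℝ) / 4)

lemma norm_coe_add_smul_sq (x y : ℝ) (A : ℍ[ℝ]) (him : A.re = 0) :
    ‖(x : ℍ[ℝ]) + y • A‖ ^ 2 = x ^ 2 + y ^ 2 * ‖A‖ ^ 2 := by
  have h1 : ‖(x : ℍ[ℝ]) + y • A‖ ^ 2 = normSq ((x : ℍ[ℝ]) + y • A) := by
    rw [sq, ← Quaternion.normSq_eq_norm_mul_self]
  have h2 : ‖A‖ ^ 2 = normSq A := by rw [sq, ← Quaternion.normSq_eq_norm_mul_self]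
  rw [h1, h2, Quaternion.normSq_def', Quaternion.normSq_def']
  simp [him]
  ring

/-- The Korányi gauge of the point
`(−A⁻¹(1 − exp(RA))B, −(2/‖A‖³)(‖A‖R − sin(‖A‖R))A)` of the CC-sphere equals
`(4(1 − cos(‖A‖R))² + 4(‖A‖R − sin(‖A‖R))²)^{1/4} / ‖A‖`. -/
theorem koranyi_gauge_of_cc_sphere_point
    (R : ℝ) (hR : 0 < R) (A B : ℍ[ℝ]) (hA : A ≠ 0) (him : A.re = 0)
    (hB : ‖B‖ = 1) :
    kGauge
      (-(A⁻¹ * ((1 - NormedSpace.exp (R • A)) * B)),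
        -(2 / ‖A‖ ^ 3 * (‖A‖ * R - Real.sin (‖A‖ * R))) • A) =
    (4 * (1 - Real.cos (‖A‖ * R)) ^ 2 +
      4 * (‖A‖ * R - Real.sin (‖A‖ * R)) ^ 2) ^ ((1 : ℝ) / 4) / ‖A‖ := by
  have hAn : (0 : ℝ) < ‖A‖ := norm_pos_iff.mpr hA
  set θ : ℝ := ‖A‖ * R with hθdef
  have hθ : (0 : ℝ) < θ := mul_pos hAn hR
  -- exponential
  have hre : (R • A).re = 0 := by simp [him]
  have hnorm : ‖R • A‖ = θ := by
    rw [norm_smul, Real.norm_eq_abs, abs_of_pos hR, hθdef]; ring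
  have hexp : NormedSpace.exp (R • A) =
      ((Real.cos θ : ℝ) : ℍ[ℝ]) + (Real.sin θ / θ) • (R • A) := by
    rw [Quaternion.exp_of_re_eq_zero _ hre, hnorm]
  have hsub : (1 : ℍ[ℝ]) - NormedSpace.exp (R • A) =
      (((1 - Real.cos θ : ℝ)) : ℍ[ℝ]) + (-(Real.sin θ / θ * R)) • A := by
    rw [hexp, smul_smul]
    push_cast
    module
  -- norm of first component
  have hn1sq : ‖(1 : ℍ[ℝ]) - NormedSpace.exp (R • A)‖ ^ 2 =
      (1 - Real.cos θ) ^ 2 + Real.sin θ ^ 2 := by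
    rw [hsub, norm_coe_add_smul_sq _ _ _ him]
    have : (-(Real.sin θ / θ * R)) ^ 2 * ‖A‖ ^ 2 = Real.sin θ ^ 2 * (θ / θ) ^ 2 := by
      field_simp [hθdef]
      ring
    rw [this, div_self hθ.ne', one_pow, mul_one]
  have hP1 : ‖-(A⁻¹ * ((1 - NormedSpace.exp (R • A)) * B))‖ =
      ‖(1 : ℍ[ℝ]) - NormedSpace.exp (R • A)‖ / ‖A‖ := by
    rw [norm_neg, norm_mul, norm_mul, norm_inv, hB, mul_one, inv_mul_eq_div]
  -- second component
  have hsin : Real.sin θ ≤ θ := le_of_lt (Real.sin_lt hθ)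
  have hP2 : ‖-(2 / ‖A‖ ^ 3 * (θ - Real.sin θ)) • A‖ =
      2 * (θ - Real.sin θ) / ‖A‖ ^ 2 := by
    rw [norm_smul, Real.norm_eq_abs, abs_neg,
      abs_of_nonneg (mul_nonneg (by positivity) (by linarith) : (0:ℝ) ≤ 2 / ‖A‖ ^ 3 * (θ - Real.sin θ))]
    field_simp
  -- combine
  unfold kGauge
  simp only [hP1, hP2]
  have h4 : ‖(1 : ℍ[ℝ]) - NormedSpace.exp (R • A)‖ ^ 4 =
      ((1 - Real.cos θ) ^ 2 + Real.sin θ ^ 2) ^ 2 := by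
    rw [show (4:ℕ) = 2 * 2 by rfl, pow_mul, hn1sq]
  have key : (‖(1 : ℍ[ℝ]) - NormedSpace.exp (R • A)‖ / ‖A‖) ^ 4 +
      (2 * (θ - Real.sin θ) / ‖A‖ ^ 2) ^ 2 =
      (4 * (1 - Real.cos θ) ^ 2 + 4 * (θ - Real.sin θ) ^ 2) / ‖A‖ ^ 4 := by
    rw [div_pow, div_pow, h4]
    have hc : Real.sin θ ^ 2 = 1 - Real.cos θ ^ 2 := by
      have := Real.sin_sq_add_cos_sq θ; linarith
    rw [hc]
    field_simp
    ring
  rw [key, Real.div_rpow (by positivity) (by positivity)]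
  congr 1
  rw [← Real.rpow_natCast ‖A‖ 4, ← Real.rpow_mul hAn.le]
  norm_num
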